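/- Covariance expansion for the majority accuracy of i.i.d. members: with s_T = σ²+μ², s_F = σ²+(1−μ)², s_TF = μ(1−μ)−σ² and k_ℓ = ⌊ℓ/2⌋+1, the second moment satisfies E[q_ℓ²] = Σ_{k=k_ℓ}^{ℓ} Σ_{m=1}^{k} Σ_{h=k_ℓ−m}^{ℓ−k} 𝟙[k_ℓ−m ≤ ℓ−k] C(ℓ,k) C(k,m) C(ℓ−k,h) s_T^m s_TF^{k−m+h} s_F^{ℓ−k−h}, so Var(q_ℓ) equals this sum minus (E[q_ℓ])². -/

import Mathlib

open Finset MeasureTheory ProbabilityTheory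

/-- Majority-voting ensemble accuracy of independent binary classifiers indexed by `L`
with individual accuracies `p i`. -/
noncomputable def majAcc {ι : Type*} [DecidableEq ι] (L : Finset ι) (p : ι → ℝ) : ℝ :=
  ∑ k ∈ Finset.Icc (L.card / 2 + 1) L.card,
    ∑ I ∈ Finset.powersetCard k L, (∏ i ∈ I, p i) * ∏ j ∈ L \ I, (1 - p j)

section Aux
variable {Ω : Type*} [MeasurableSpace Ω] {μ : Measure Ω} [IsProbabilityMeasure μ]

/-- bounded measurable is integrable -/
lemma integrable_of_bdd {f : Ω → ℝ} (hf : Measurable f) (C : ℝ) (h : ∀ ω, |f ω| ≤ C) :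
    Integrable f μ :=
  ⟨hf.aestronglyMeasurable, HasFiniteIntegral.of_bounded (C := C) (ae_of_all _ h)⟩

lemma memLp2_of_bdd {f : Ω → ℝ} (hf : Measurable f) (C : ℝ) (h : ∀ ω, |f ω| ≤ C) :
    MemLp f 2 μ :=
  (memLp_top_of_bound hf.aestronglyMeasurable C (ae_of_all _ h)).mono_exponent le_top

/-- product of independent functions: integral of product is product of integrals -/
lemma integral_prod_indep {f : ℕ → Ω → ℝ} (hindep : iIndepFun f μ)
    (hmeas : ∀ i, Measurable (f i)) (S : Finset ℕ) :
    ∫ ω, ∏ i ∈ S, f i ω ∂μ = ∏ i ∈ S, ∫ ω, f i ω ∂μ := by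
  classical
  induction S using Finset.induction with
  | empty => simp
  | @insert a S ha ih =>
    have hi : IndepFun (fun ω => ∏ i ∈ S, f i ω) (f a) μ := by
      have := hindep.indepFun_finsetProd_of_notMem hmeas ha
      simpa [Finset.prod_fn] using this
    have h1 : ∫ ω, ∏ i ∈ insert a S, f i ω ∂μ
        = (∫ ω, ∏ i ∈ S, f i ω ∂μ) * ∫ ω, f a ω ∂μ := by
      simp only [Finset.prod_insert ha]
      rw [← hi.integral_mul_eq_mul_integral (Finset.measurable_prod _
        (fun i _ => hmeas i)).aestronglyMeasurable (hmeas a).aestronglyMeasurable]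
      congr 1; ext ω; rw [Pi.mul_apply]; ring
    rw [h1, ih, Finset.prod_insert ha]; ring

section Moments
variable {X : Ω → ℝ} (hX : Measurable X) (hb : ∀ ω, X ω ∈ Set.Icc (0:ℝ) 1)

include hX hb

lemma abs_le_one_of_Icc : ∀ ω, |X ω| ≤ 1 := fun ω => by
  have := hb ω; rw [abs_le]; constructor <;> [linarith [this.1]; exact this.2]

lemma int_sq : ∫ ω, (X ω)^2 ∂μ = variance X μ + (∫ ω, X ω ∂μ)^2 := by
  have h2 : MemLp X 2 μ := memLp2_of_bdd hX 1 (abs_le_one_of_Icc hX hb)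
  have := variance_eq_sub h2
  simp only [Pi.pow_apply] at this
  linarith [this]

lemma int_one_sub_sq : ∫ ω, (1 - X ω)^2 ∂μ
    = variance X μ + (1 - ∫ ω, X ω ∂μ)^2 := by
  have habs := abs_le_one_of_Icc hX hb
  have hi : Integrable X μ := integrable_of_bdd hX 1 habs
  have hi2 : Integrable (fun ω => (X ω)^2) μ := by
    apply integrable_of_bdd (hX.pow_const 2) 1
    intro ω; rw [abs_pow, ← one_pow 2]
    exact pow_le_pow_left₀ (abs_nonneg _) (habs ω) 2
  have : ∀ ω, (1 - X ω)^2 = 1 - 2 * X ω + (X ω)^2 := fun ω => by ring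
  simp only [this]
  have hi1 : Integrable (fun ω => 1 - 2 * X ω) μ := by
    apply integrable_of_bdd ((measurable_const.sub (hX.const_mul 2))) 3
    intro ω; show |1 - 2 * X ω| ≤ 3; have := habs ω; rw [abs_le] at this ⊢; constructor <;> linarith [this.1, this.2]
  rw [integral_add hi1 hi2]
  have h3 : ∫ ω, (1 - 2 * X ω) ∂μ = 1 - 2 * ∫ ω, X ω ∂μ := by
    rw [integral_sub (integrable_const 1) (hi.const_mul 2), integral_const,
      integral_const_mul]
    simp
  rw [h3, int_sq hX hb]; ring

lemma int_mul_one_sub : ∫ ω, X ω * (1 - X ω) ∂μ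
    = (∫ ω, X ω ∂μ) * (1 - ∫ ω, X ω ∂μ) - variance X μ := by
  have habs := abs_le_one_of_Icc hX hb
  have hi : Integrable X μ := integrable_of_bdd hX 1 habs
  have hi2 : Integrable (fun ω => (X ω)^2) μ := by
    apply integrable_of_bdd (hX.pow_const 2) 1
    intro ω; rw [abs_pow, ← one_pow 2]
    exact pow_le_pow_left₀ (abs_nonneg _) (habs ω) 2
  have : ∀ ω, X ω * (1 - X ω) = X ω - (X ω)^2 := fun ω => by ring
  simp only [this]
  rw [integral_sub hi hi2, int_sq hX hb]; ring

end Moments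

section Pairs
variable (p : ℕ → Ω → ℝ) (hmeas : ∀ i, Measurable (p i))
  (hindep : iIndepFun p μ)
  (hident : ∀ i, IdentDistrib (p i) (p 0) μ μ)
  (hbdd : ∀ i, ∀ ω, p i ω ∈ Set.Icc (0 : ℝ) 1)

lemma w_eq (s I : Finset ℕ) (hI : I ⊆ s) (ω : Ω) :
    (∏ i ∈ I, p i ω) * ∏ j ∈ s \ I, (1 - p j ω)
      = ∏ i ∈ s, (if i ∈ I then p i ω else 1 - p i ω) := by
  rw [Finset.prod_ite, Finset.filter_mem_eq_inter, Finset.inter_eq_right.mpr hI,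
    ← Finset.sdiff_eq_filter]

include hmeas hindep hident hbdd in
lemma pair_exp (s I I' : Finset ℕ) (hI : I ⊆ s) (hI' : I' ⊆ s)
    (m σ2 sT sF sTF : ℝ)
    (hm : m = ∫ ω, p 0 ω ∂μ) (hσ : σ2 = variance (p 0) μ)
    (hT : sT = σ2 + m ^ 2) (hF : sF = σ2 + (1 - m) ^ 2)
    (hTF : sTF = m * (1 - m) - σ2) :
    ∫ ω, ((∏ i ∈ I, p i ω) * ∏ j ∈ s \ I, (1 - p j ω))
        * ((∏ i ∈ I', p i ω) * ∏ j ∈ s \ I', (1 - p j ω)) ∂μ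
      = sT ^ (I ∩ I').card * sTF ^ ((I \ I').card + (I' \ I).card)
          * sF ^ ((s \ (I ∪ I')).card) := by
  classical
  set φ : ℕ → ℝ → ℝ := fun i x =>
    (if i ∈ I then x else 1 - x) * (if i ∈ I' then x else 1 - x) with hφdef
  have mfac : ∀ (i : ℕ) (J : Finset ℕ), Measurable fun x : ℝ => if i ∈ J then x else 1 - x := by
    intro i J
    by_cases h : i ∈ J <;> simp only [h, if_true, if_false]
    · exact measurable_id
    · exact measurable_const.sub measurable_id
  have hφm : ∀ i, Measurable (φ i) := fun i => (mfac i I).mul (mfac i I')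
  have hint : ∀ ω, ((∏ i ∈ I, p i ω) * ∏ j ∈ s \ I, (1 - p j ω))
        * ((∏ i ∈ I', p i ω) * ∏ j ∈ s \ I', (1 - p j ω))
      = ∏ i ∈ s, φ i (p i ω) := by
    intro ω
    rw [w_eq p s I hI ω, w_eq p s I' hI' ω, ← Finset.prod_mul_distrib]
  simp only [hint]
  have key := integral_prod_indep (μ := μ) (hindep.comp φ hφm)
    (fun i => (hφm i).comp (hmeas i)) s
  simp only [Function.comp_apply] at key
  rw [key]
  have hval : ∀ i, ∫ ω, φ i (p i ω) ∂μ
      = if i ∈ I then (if i ∈ I' then sT else sTF)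
        else (if i ∈ I' then sTF else sF) := by
    intro i
    have hident' : ∀ g : ℝ → ℝ, Measurable g →
        ∫ ω, g (p i ω) ∂μ = ∫ ω, g (p 0 ω) ∂μ := fun g hg =>
      ((hident i).comp hg).integral_eq
    subst hT hF hTF hσ hm
    by_cases h1 : i ∈ I <;> by_cases h2 : i ∈ I' <;>
      simp only [hφdef, h1, h2, if_true, if_false]
    · have h := hident' (fun x => x * x) (measurable_id.mul measurable_id)
      rw [h]
      simpa [pow_two] using int_sq (μ := μ) (hmeas 0) (hbdd 0)
    · have h := hident' (fun x => x * (1 - x))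
        (measurable_id.mul (measurable_const.sub measurable_id))
      rw [h]
      exact int_mul_one_sub (hmeas 0) (hbdd 0)
    · have e : ∀ ω, (1 - p i ω) * p i ω = p i ω * (1 - p i ω) := fun ω => mul_comm _ _
      simp only [e]
      have h := hident' (fun x => x * (1 - x))
        (measurable_id.mul (measurable_const.sub measurable_id))
      rw [h]
      exact int_mul_one_sub (hmeas 0) (hbdd 0)
    · have h := hident' (fun x => (1 - x) * (1 - x))
        ((measurable_const.sub measurable_id).mul (measurable_const.sub measurable_id))
      rw [h]
      simpa [pow_two] using int_one_sub_sq (μ := μ) (hmeas 0) (hbdd 0)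
  simp only [hval]
  rw [Finset.prod_ite, Finset.filter_mem_eq_inter, Finset.inter_eq_right.mpr hI,
    ← Finset.sdiff_eq_filter, Finset.prod_ite, Finset.prod_ite,
    Finset.filter_mem_eq_inter, Finset.filter_mem_eq_inter,
    ← Finset.sdiff_eq_filter, ← Finset.sdiff_eq_filter]
  simp only [Finset.prod_const]
  have e1 : (s \ I) ∩ I' = I' \ I := by
    ext x
    simp only [Finset.mem_inter, Finset.mem_sdiff]
    constructor
    · rintro ⟨⟨_, h2⟩, h3⟩; exact ⟨h3, h2⟩
    · rintro ⟨h1, h2⟩; exact ⟨⟨hI' h1, h2⟩, h1⟩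
  have e2 : (s \ I) \ I' = s \ (I ∪ I') := by
    ext x
    simp only [Finset.mem_sdiff, Finset.mem_union]
    tauto
  rw [e1, e2, pow_add]
  ring
end Pairs

section Comb

lemma sum_filter_card_powerset {M : Type*} [AddCommMonoid M] (s : Finset ℕ) (a : ℕ)
    (F : Finset ℕ → M) :
    ∑ I ∈ s.powerset.filter (fun I => a ≤ I.card), F I
      = ∑ k ∈ Finset.Icc a s.card, ∑ I ∈ s.powersetCard k, F I := by
  classical
  rw [Finset.sum_filter, Finset.sum_powerset]
  have h1 : ∀ j ∈ Finset.range (s.card + 1),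
      ∑ I ∈ s.powersetCard j, (if a ≤ I.card then F I else 0)
        = if a ≤ j then ∑ I ∈ s.powersetCard j, F I else 0 := by
    intro j _
    by_cases h : a ≤ j
    · rw [if_pos h]
      apply Finset.sum_congr rfl
      intro I hI
      rw [if_pos]
      rw [(Finset.mem_powersetCard.mp hI).2]; exact h
    · rw [if_neg h]
      apply Finset.sum_eq_zero
      intro I hI
      rw [if_neg]
      rw [(Finset.mem_powersetCard.mp hI).2]; exact h
  rw [Finset.sum_congr rfl h1, ← Finset.sum_filter]
  apply Finset.sum_congr _ (fun _ _ => rfl)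
  ext j
  simp only [Finset.mem_filter, Finset.mem_range, Finset.mem_Icc, Nat.lt_succ_iff]
  tauto

lemma sum_powerset_split {M : Type*} [AddCommMonoid M] (s I : Finset ℕ) (hI : I ⊆ s)
    (F : Finset ℕ → M) :
    ∑ I' ∈ s.powerset, F I' = ∑ J ∈ I.powerset, ∑ H ∈ (s \ I).powerset, F (J ∪ H) := by
  classical
  rw [← Finset.sum_product']
  apply Finset.sum_nbij' (i := fun I' => (I' ∩ I, I' \ I)) (j := fun q => q.1 ∪ q.2)
  · intro I' hI'
    simp only [Finset.mem_product, Finset.mem_powerset] at *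
    exact ⟨Finset.inter_subset_right, fun x hx => by
      simp only [Finset.mem_sdiff] at hx ⊢
      exact ⟨hI' hx.1, hx.2⟩⟩
  · intro q hq
    simp only [Finset.mem_product, Finset.mem_powerset] at *
    exact Finset.union_subset (hq.1.trans hI) ((hq.2).trans (Finset.sdiff_subset))
  · intro I' _
    ext x
    simp only [Finset.mem_union, Finset.mem_inter, Finset.mem_sdiff]
    tauto
  · intro q hq
    simp only [Finset.mem_product, Finset.mem_powerset] at hq
    have h1 : q.1 ⊆ I := hq.1
    have h2 : q.2 ⊆ s \ I := hq.2
    have h2' : ∀ x ∈ q.2, x ∉ I := fun x hx => (Finset.mem_sdiff.mp (h2 hx)).2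
    have e1 : (q.1 ∪ q.2) ∩ I = q.1 := by
      ext x
      simp only [Finset.mem_inter, Finset.mem_union]
      constructor
      · rintro ⟨h | h, hxI⟩
        · exact h
        · exact absurd hxI (h2' x h)
      · intro h; exact ⟨Or.inl h, h1 h⟩
    have e2 : (q.1 ∪ q.2) \ I = q.2 := by
      ext x
      simp only [Finset.mem_sdiff, Finset.mem_union]
      constructor
      · rintro ⟨h | h, hxI⟩
        · exact absurd (h1 h) hxI
        · exact h
      · intro h; exact ⟨Or.inr h, h2' x h⟩
    rw [Prod.ext_iff]
    exact ⟨e1, e2⟩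
  · intro I' _
    have : I' ∩ I ∪ I' \ I = I' := by
      ext x
      simp only [Finset.mem_union, Finset.mem_inter, Finset.mem_sdiff]
      tauto
    rw [this]
end Comb

lemma comb_inner (ℓ k : ℕ) (I : Finset ℕ) (hI : I ⊆ Finset.range ℓ) (hk : I.card = k)
    (hka : ℓ/2+1 ≤ k) (hkl : k ≤ ℓ) (sT sF sTF : ℝ) :
    ∑ I' ∈ (Finset.range ℓ).powerset.filter (fun I' => ℓ/2+1 ≤ I'.card),
        sT ^ (I ∩ I').card * sTF ^ ((I \ I').card + (I' \ I).card)
          * sF ^ ((Finset.range ℓ \ (I ∪ I')).card)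
      = ∑ j ∈ Finset.Icc 1 k, ∑ h ∈ Finset.Icc (ℓ/2+1-j) (ℓ-k),
          (k.choose j : ℝ) * (((ℓ-k).choose h : ℝ) * (sT^j * sTF^(k-j+h) * sF^(ℓ-k-h))) := by
  classical
  set a := ℓ/2+1 with ha
  rw [Finset.sum_filter, sum_powerset_split (Finset.range ℓ) I hI]
  have hcard : (Finset.range ℓ \ I).card = ℓ - k := by
    rw [Finset.card_sdiff_of_subset hI, Finset.card_range, hk]
  have hstep : ∀ J ∈ I.powerset, ∀ H ∈ (Finset.range ℓ \ I).powerset,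
      (if a ≤ (J ∪ H).card then
          sT ^ (I ∩ (J ∪ H)).card * sTF ^ ((I \ (J ∪ H)).card + ((J ∪ H) \ I).card)
            * sF ^ ((Finset.range ℓ \ (I ∪ (J ∪ H))).card) else 0)
        = if a ≤ J.card + H.card then
            sT ^ J.card * sTF ^ ((k - J.card) + H.card) * sF ^ (ℓ - k - H.card) else 0 := by
    intro J hJ H hH
    rw [Finset.mem_powerset] at hJ hH
    have hHI : ∀ x ∈ H, x ∉ I := fun x hx => (Finset.mem_sdiff.mp (hH hx)).2
    have hdisj : Disjoint J H := by
      rw [Finset.disjoint_left]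
      intro x hxJ hxH
      exact hHI x hxH (hJ hxJ)
    have e0 : (J ∪ H).card = J.card + H.card := Finset.card_union_of_disjoint hdisj
    have e1 : I ∩ (J ∪ H) = J := by
      ext x
      simp only [Finset.mem_inter, Finset.mem_union]
      constructor
      · rintro ⟨hxI, h | h⟩
        · exact h
        · exact absurd hxI (hHI x h)
      · intro h; exact ⟨hJ h, Or.inl h⟩
    have e2 : I \ (J ∪ H) = I \ J := by
      ext x
      simp only [Finset.mem_sdiff, Finset.mem_union]
      constructor
      · rintro ⟨hxI, hx⟩; exact ⟨hxI, fun h => hx (Or.inl h)⟩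
      · rintro ⟨hxI, hx⟩
        refine ⟨hxI, fun h => ?_⟩
        rcases h with h | h
        · exact hx h
        · exact hHI x h hxI
    have e3 : (J ∪ H) \ I = H := by
      ext x
      simp only [Finset.mem_sdiff, Finset.mem_union]
      constructor
      · rintro ⟨h | h, hx⟩
        · exact absurd (hJ h) hx
        · exact h
      · intro h; exact ⟨Or.inr h, hHI x h⟩
    have e4 : I ∪ (J ∪ H) = I ∪ H := by
      ext x
      simp only [Finset.mem_union]
      constructor
      · rintro (h | h | h)
        · exact Or.inl h
        · exact Or.inl (hJ h)
        · exact Or.inr h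
      · rintro (h | h)
        · exact Or.inl h
        · exact Or.inr (Or.inr h)
    have e5 : (I \ J).card = k - J.card := by rw [Finset.card_sdiff_of_subset hJ, hk]
    have e6 : (Finset.range ℓ \ (I ∪ H)).card = ℓ - k - H.card := by
      have hsub : I ∪ H ⊆ Finset.range ℓ :=
        Finset.union_subset hI (hH.trans Finset.sdiff_subset)
      have hdisj2 : Disjoint I H := by
        rw [Finset.disjoint_right]
        exact hHI
      rw [Finset.card_sdiff_of_subset hsub, Finset.card_range,
        Finset.card_union_of_disjoint hdisj2, hk, Nat.sub_sub]
    rw [e0, e1, e2, e3, e4, e5, e6]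
  rw [Finset.sum_congr rfl (fun J hJ => Finset.sum_congr rfl (fun H hH => hstep J hJ H hH))]
  have inner : ∀ j : ℕ, ∑ H ∈ (Finset.range ℓ \ I).powerset,
      (if a ≤ j + H.card then sT ^ j * sTF ^ ((k - j) + H.card) * sF ^ (ℓ - k - H.card) else 0)
      = ∑ h ∈ Finset.Icc (a - j) (ℓ - k),
          ((ℓ-k).choose h : ℝ) * (sT ^ j * sTF ^ ((k - j) + h) * sF ^ (ℓ - k - h)) := by
    intro j
    have h1 := Finset.sum_powerset_apply_card
      (f := fun h => if a ≤ j + h then sT ^ j * sTF ^ ((k - j) + h) * sF ^ (ℓ - k - h) else 0)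
      (x := Finset.range ℓ \ I)
    rw [hcard] at h1
    rw [h1]
    have h2 : ∀ h : ℕ, ((ℓ-k).choose h) •
        (if a ≤ j + h then sT ^ j * sTF ^ ((k - j) + h) * sF ^ (ℓ - k - h) else 0)
        = if a ≤ j + h then ((ℓ-k).choose h : ℝ) *
            (sT ^ j * sTF ^ ((k - j) + h) * sF ^ (ℓ - k - h)) else 0 := by
      intro h
      rw [nsmul_eq_mul, mul_ite, mul_zero]
    rw [Finset.sum_congr rfl (fun h _ => h2 h), ← Finset.sum_filter]
    apply Finset.sum_congr _ (fun _ _ => rfl)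
    ext h
    simp only [Finset.mem_filter, Finset.mem_range, Finset.mem_Icc, Nat.lt_succ_iff, ha]
    omega
  rw [Finset.sum_congr rfl (fun J _ => inner J.card)]
  have h3 := Finset.sum_powerset_apply_card
    (f := fun j => ∑ h ∈ Finset.Icc (a - j) (ℓ - k),
      ((ℓ-k).choose h : ℝ) * (sT ^ j * sTF ^ ((k - j) + h) * sF ^ (ℓ - k - h)))
    (x := I)
  rw [hk] at h3
  rw [h3]
  rw [show Finset.range (k+1) = Finset.Icc 0 k by
    rw [Finset.range_eq_Ico, Finset.Ico_add_one_right_eq_Icc]]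
  rw [← Finset.sum_subset (Finset.Icc_subset_Icc_left (Nat.zero_le 1))
    (fun j hj hj' => ?_)]
  · apply Finset.sum_congr rfl
    intro j hj
    rw [nsmul_eq_mul, Finset.mul_sum]
  · -- j = 0 case
    rw [Finset.mem_Icc] at hj
    rw [Finset.mem_Icc] at hj'
    have hj0 : j = 0 := by omega
    subst hj0
    have : Finset.Icc (a - 0) (ℓ - k) = ∅ := by
      apply Finset.Icc_eq_empty
      omega
    rw [this, Finset.sum_empty, smul_zero]

theorem second_moment_majAcc_iid' {Ω : Type*} [MeasurableSpace Ω] (μ : Measure Ω)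
    [IsProbabilityMeasure μ] (p : ℕ → Ω → ℝ) (hmeas : ∀ i, Measurable (p i))
    (hindep : iIndepFun p μ)
    (hident : ∀ i, IdentDistrib (p i) (p 0) μ μ)
    (hbdd : ∀ i, ∀ ω, p i ω ∈ Set.Icc (0 : ℝ) 1)
    (m σ2 sT sF sTF : ℝ)
    (hm : m = ∫ ω, p 0 ω ∂μ) (hσ : σ2 = variance (p 0) μ)
    (hT : sT = σ2 + m ^ 2) (hF : sF = σ2 + (1 - m) ^ 2)
    (hTF : sTF = m * (1 - m) - σ2) (ℓ : ℕ) :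
    (∫ ω, (majAcc (Finset.range ℓ) (fun i => p i ω)) ^ 2 ∂μ)
      = ∑ k ∈ Finset.Icc (ℓ / 2 + 1) ℓ, ∑ j ∈ Finset.Icc 1 k,
          ∑ h ∈ Finset.Icc (ℓ / 2 + 1 - j) (ℓ - k),
            (if ℓ / 2 + 1 - j ≤ ℓ - k then (1 : ℝ) else 0) *
              (ℓ.choose k : ℝ) * (k.choose j : ℝ) * ((ℓ - k).choose h : ℝ) *
              sT ^ j * sTF ^ (k - j + h) * sF ^ (ℓ - k - h) ∧
    variance (fun ω => majAcc (Finset.range ℓ) (fun i => p i ω)) μ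
      = (∫ ω, (majAcc (Finset.range ℓ) (fun i => p i ω)) ^ 2 ∂μ)
        - (∫ ω, majAcc (Finset.range ℓ) (fun i => p i ω) ∂μ) ^ 2 := by
  classical
  set 𝒮 : Finset (Finset ℕ) :=
    (Finset.range ℓ).powerset.filter (fun I => ℓ/2+1 ≤ I.card) with h𝒮
  set w : Finset ℕ → Ω → ℝ :=
    fun I ω => (∏ i ∈ I, p i ω) * ∏ j ∈ Finset.range ℓ \ I, (1 - p j ω) with hw
  have hq : ∀ ω, majAcc (Finset.range ℓ) (fun i => p i ω) = ∑ I ∈ 𝒮, w I ω := by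
    intro ω
    rw [h𝒮, sum_filter_card_powerset (Finset.range ℓ) (ℓ/2+1) (fun I => w I ω)]
    simp only [majAcc, Finset.card_range, hw]
  have hwmeas : ∀ I, Measurable (w I) := by
    intro I
    exact (Finset.measurable_prod _ (fun i _ => hmeas i)).mul
      (Finset.measurable_prod _ (fun i _ => measurable_const.sub (hmeas i)))
  have hwbdd : ∀ I ω, w I ω ∈ Set.Icc (0:ℝ) 1 := by
    intro I ω
    have h1 : (∏ i ∈ I, p i ω) ∈ Set.Icc (0:ℝ) 1 := by
      constructor
      · exact Finset.prod_nonneg (fun i _ => (hbdd i ω).1)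
      · exact Finset.prod_le_one (fun i _ => (hbdd i ω).1) (fun i _ => (hbdd i ω).2)
    have h2 : (∏ j ∈ Finset.range ℓ \ I, (1 - p j ω)) ∈ Set.Icc (0:ℝ) 1 := by
      constructor
      · exact Finset.prod_nonneg (fun i _ => by linarith [(hbdd i ω).2])
      · exact Finset.prod_le_one (fun i _ => by linarith [(hbdd i ω).2])
          (fun i _ => by linarith [(hbdd i ω).1])
    exact ⟨mul_nonneg h1.1 h2.1, mul_le_one₀ h1.2 h2.1 h2.2⟩
  have hwabs : ∀ I ω, |w I ω| ≤ 1 := fun I ω => by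
    have := hwbdd I ω; rw [abs_le]; exact ⟨by linarith [this.1], this.2⟩
  have hprodint : ∀ I I' : Finset ℕ, Integrable (fun ω => w I ω * w I' ω) μ := by
    intro I I'
    apply integrable_of_bdd ((hwmeas I).mul (hwmeas I')) 1
    intro ω
    show |w I ω * w I' ω| ≤ 1
    rw [abs_mul]
    calc |w I ω| * |w I' ω| ≤ 1 * 1 :=
          mul_le_mul (hwabs I ω) (hwabs I' ω) (abs_nonneg _) zero_le_one
      _ = 1 := mul_one 1
  have hsecond : (∫ ω, (majAcc (Finset.range ℓ) (fun i => p i ω)) ^ 2 ∂μ)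
      = ∑ I ∈ 𝒮, ∑ I' ∈ 𝒮, ∫ ω, w I ω * w I' ω ∂μ := by
    have e : ∀ ω, (majAcc (Finset.range ℓ) (fun i => p i ω)) ^ 2
        = ∑ I ∈ 𝒮, ∑ I' ∈ 𝒮, w I ω * w I' ω := by
      intro ω
      rw [hq ω, sq, Finset.sum_mul_sum]
    simp only [e]
    rw [integral_finset_sum _ (fun I _ => integrable_finset_sum _
      (fun I' _ => hprodint I I'))]
    exact Finset.sum_congr rfl (fun I _ => integral_finset_sum _
      (fun I' _ => hprodint I I'))
  have hpair : ∀ I ∈ 𝒮, ∀ I' ∈ 𝒮, ∫ ω, w I ω * w I' ω ∂μ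
      = sT ^ (I ∩ I').card * sTF ^ ((I \ I').card + (I' \ I).card)
          * sF ^ ((Finset.range ℓ \ (I ∪ I')).card) := by
    intro I hI I' hI'
    rw [h𝒮, Finset.mem_filter, Finset.mem_powerset] at hI hI'
    exact pair_exp p hmeas hindep hident hbdd (Finset.range ℓ) I I' hI.1 hI'.1
      m σ2 sT sF sTF hm hσ hT hF hTF
  constructor
  · rw [hsecond, Finset.sum_congr rfl (fun I hI => Finset.sum_congr rfl
      (fun I' hI' => hpair I hI I' hI'))]
    rw [h𝒮, sum_filter_card_powerset (Finset.range ℓ) (ℓ/2+1)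
      (fun I => ∑ I' ∈ (Finset.range ℓ).powerset.filter (fun I' => ℓ/2+1 ≤ I'.card),
        sT ^ (I ∩ I').card * sTF ^ ((I \ I').card + (I' \ I).card)
          * sF ^ ((Finset.range ℓ \ (I ∪ I')).card)), Finset.card_range]
    apply Finset.sum_congr rfl
    intro k hk
    rw [Finset.mem_Icc] at hk
    have hinner : ∀ I ∈ (Finset.range ℓ).powersetCard k,
        ∑ I' ∈ (Finset.range ℓ).powerset.filter (fun I' => ℓ/2+1 ≤ I'.card),
          sT ^ (I ∩ I').card * sTF ^ ((I \ I').card + (I' \ I).card)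
            * sF ^ ((Finset.range ℓ \ (I ∪ I')).card)
        = ∑ j ∈ Finset.Icc 1 k, ∑ h ∈ Finset.Icc (ℓ/2+1-j) (ℓ-k),
            (k.choose j : ℝ) * (((ℓ-k).choose h : ℝ)
              * (sT^j * sTF^(k-j+h) * sF^(ℓ-k-h))) := by
      intro I hI
      rw [Finset.mem_powersetCard] at hI
      exact comb_inner ℓ k I hI.1 hI.2 hk.1 hk.2 sT sF sTF
    rw [Finset.sum_congr rfl hinner, Finset.sum_const, Finset.card_powersetCard,
      Finset.card_range, nsmul_eq_mul, Finset.mul_sum]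
    apply Finset.sum_congr rfl
    intro j _
    rw [Finset.mul_sum]
    apply Finset.sum_congr rfl
    intro h hh
    rw [Finset.mem_Icc] at hh
    rw [if_pos (le_trans hh.1 hh.2)]
    ring
  · have hqmeas : Measurable (fun ω => majAcc (Finset.range ℓ) (fun i => p i ω)) := by
      simp only [hq]
      exact Finset.measurable_sum _ (fun I _ => hwmeas I)
    have hqbdd : ∀ ω, |majAcc (Finset.range ℓ) (fun i => p i ω)| ≤ (𝒮.card : ℝ) := by
      intro ω
      rw [hq ω]
      calc |∑ I ∈ 𝒮, w I ω| ≤ ∑ I ∈ 𝒮, |w I ω| := Finset.abs_sum_le_sum_abs _ _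
        _ ≤ ∑ I ∈ 𝒮, 1 := Finset.sum_le_sum (fun I _ => hwabs I ω)
        _ = (𝒮.card : ℝ) := by rw [Finset.sum_const, nsmul_eq_mul, mul_one]
    have hlp : MemLp (fun ω => majAcc (Finset.range ℓ) (fun i => p i ω)) 2 μ :=
      memLp2_of_bdd hqmeas (𝒮.card : ℝ) hqbdd
    have := variance_eq_sub hlp
    simp only [Pi.pow_apply] at this
    exact this

end Aux

/-- Covariance expansion for the majority accuracy of i.i.d. members: with
`s_T = σ²+μ²`, `s_F = σ²+(1−μ)²`, `s_TF = μ(1−μ)−σ²` and `k_ℓ = ⌊ℓ/2⌋+1`,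
`E[q_ℓ²] = Σ_{k=k_ℓ}^{ℓ} Σ_{m=1}^{k} Σ_{h=k_ℓ−m}^{ℓ−k} 𝟙[k_ℓ−m ≤ ℓ−k]
C(ℓ,k) C(k,m) C(ℓ−k,h) s_T^m s_TF^{k−m+h} s_F^{ℓ−k−h}`,
so `Var(q_ℓ)` equals this sum minus `(E[q_ℓ])²`. -/
theorem second_moment_majAcc_iid {Ω : Type*} [MeasurableSpace Ω] (μ : Measure Ω)
    [IsProbabilityMeasure μ] (p : ℕ → Ω → ℝ) (hmeas : ∀ i, Measurable (p i))
    (hindep : iIndepFun p μ)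
    (hident : ∀ i, IdentDistrib (p i) (p 0) μ μ)
    (hbdd : ∀ i, ∀ ω, p i ω ∈ Set.Icc (0 : ℝ) 1)
    (m σ2 sT sF sTF : ℝ)
    (hm : m = ∫ ω, p 0 ω ∂μ) (hσ : σ2 = variance (p 0) μ)
    (hT : sT = σ2 + m ^ 2) (hF : sF = σ2 + (1 - m) ^ 2)
    (hTF : sTF = m * (1 - m) - σ2) (ℓ : ℕ) :
    (∫ ω, (majAcc (Finset.range ℓ) (fun i => p i ω)) ^ 2 ∂μ)
      = ∑ k ∈ Finset.Icc (ℓ / 2 + 1) ℓ, ∑ j ∈ Finset.Icc 1 k,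
          ∑ h ∈ Finset.Icc (ℓ / 2 + 1 - j) (ℓ - k),
            (if ℓ / 2 + 1 - j ≤ ℓ - k then (1 : ℝ) else 0) *
              (ℓ.choose k : ℝ) * (k.choose j : ℝ) * ((ℓ - k).choose h : ℝ) *
              sT ^ j * sTF ^ (k - j + h) * sF ^ (ℓ - k - h) ∧
    variance (fun ω => majAcc (Finset.range ℓ) (fun i => p i ω)) μ
      = (∫ ω, (majAcc (Finset.range ℓ) (fun i => p i ω)) ^ 2 ∂μ)
        - (∫ ω, majAcc (Finset.range ℓ) (fun i => p i ω) ∂μ) ^ 2 := by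
  exact second_moment_majAcc_iid' μ p hmeas hindep hident hbdd m σ2 sT sF sTF hm hσ hT hF hTF ℓ
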